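/- Let y ∈ ℝ^n, and for each symbol α of the SLP let occ(α, ℓ) be the number of occurrences of α in the derivation tree of the ℓ-th final-string nonterminal N_{i_ℓ}. Define sum_y(α) = Σ_{ℓ=1}^{n} occ(α, ℓ) · y[ℓ]. Then for the left multiplication x^T = y^T M, where row ℓ of M is the expansion of N_{i_ℓ} in CSRV encoding, it holds that x[j] = Σ over terminal pairs (i,j) (summing over i) of V[i] · sum_y((i,j)). -/

import Mathlib

/-- Symbols of an SLP. -/
inductive SlpSym (k m q : ℕ) where
  | term : Fin k × Fin m → SlpSym k m q
  | nt : Fin q → SlpSym k m q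
deriving DecidableEq

instance lawfulBEqProd' {α β : Type*} [BEq α] [LawfulBEq α] [BEq β] [LawfulBEq β] :
    LawfulBEq (α × β) where
  eq_of_beq {p q} h := by
    obtain ⟨a, b⟩ := p; obtain ⟨c, d⟩ := q
    have h' : (a == c && b == d) = true := h
    simp only [Bool.and_eq_true, beq_iff_eq] at h'
    simp [h'.1, h'.2]
  rfl {p} := by
    obtain ⟨a, b⟩ := p
    show (a == a && b == b) = true
    simp

theorem count_eq_one_of_mem' {α : Type*} [BEq α] [LawfulBEq α] {a : α} {l : List α}
    (d : l.Nodup) (h : a ∈ l) : l.count a = 1 := by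
  induction l with
  | nil => simp at h
  | cons b t ih =>
    rcases List.mem_cons.mp h with rfl | h'
    · rw [List.count_cons_self,
        List.count_eq_zero_of_not_mem (List.nodup_cons.mp d).1]
    · have hne : a ≠ b := fun e => (List.nodup_cons.mp d).1 (e ▸ h')
      rw [List.count_cons_of_ne hne.symm]
      exact ih (List.nodup_cons.mp d).2 h'

/-- Let the SLP generate the CSRV sequence of `M ∈ ℝ^{n×m}`:
the expansion of the final-string nonterminal `N_{i_ℓ}` is the list of pairs
`(i,j)` encoding the nonzero entries `M[ℓ][j] = V[i]` of row `ℓ`, each appearing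
exactly once.  With `occ(α, ℓ)` the number of occurrences of symbol `α` in the
derivation tree of `N_{i_ℓ}` and `sum_y(α) = Σ_ℓ occ(α, ℓ)·y[ℓ]`, the left
multiplication `x^T = y^T M` satisfies, for every column `j`,
`x[j] = Σ_i V[i] · sum_y((i,j))`. -/
theorem left_mul_via_occ (k m q n : ℕ)
    (rules : Fin q → SlpSym k m q × SlpSym k m q)
    (horder : ∀ j i : Fin q,
      ((rules j).1 = SlpSym.nt i ∨ (rules j).2 = SlpSym.nt i) → i < j)
    (C : Fin n → Fin q)
    (exp : SlpSym k m q → List (Fin k × Fin m))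
    (hexp_t : ∀ p, exp (SlpSym.term p) = [p])
    (hexp_n : ∀ j, exp (SlpSym.nt j) = exp (rules j).1 ++ exp (rules j).2)
    (occ : SlpSym k m q → SlpSym k m q → ℕ)
    (hocc_term : ∀ (α : SlpSym k m q) (p : Fin k × Fin m),
      occ α (SlpSym.term p) = if α = SlpSym.term p then 1 else 0)
    (hocc_nt : ∀ (α : SlpSym k m q) (j : Fin q),
      occ α (SlpSym.nt j) =
        (if α = SlpSym.nt j then 1 else 0) + occ α (rules j).1 + occ α (rules j).2)
    (M : Fin n → Fin m → ℝ) (V : Fin k → ℝ)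
    (hVinj : Function.Injective V) (hVnz : ∀ i, V i ≠ 0)
    (hval : ∀ ℓ : Fin n, ∀ p ∈ exp (SlpSym.nt (C ℓ)), V p.1 = M ℓ p.2)
    (hnodup : ∀ ℓ : Fin n, ((exp (SlpSym.nt (C ℓ))).map Prod.snd).Nodup)
    (hcolsM : ∀ (ℓ : Fin n) (j : Fin m),
      j ∈ (exp (SlpSym.nt (C ℓ))).map Prod.snd ↔ M ℓ j ≠ 0)
    (y : Fin n → ℝ) (j : Fin m) :
    (∑ ℓ, y ℓ * M ℓ j) =
      ∑ i : Fin k, V i *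
        (∑ ℓ, (occ (SlpSym.term (i, j)) (SlpSym.nt (C ℓ)) : ℝ) * y ℓ) := by
  -- occ of a terminal equals count in expansion
  have hocc_count : ∀ (p : Fin k × Fin m) (s : SlpSym k m q),
      occ (SlpSym.term p) s = (exp s).count p := by
    intro p
    have hnt : ∀ N : ℕ, ∀ i : Fin q, i.val < N →
        occ (SlpSym.term p) (SlpSym.nt i) = (exp (SlpSym.nt i)).count p := by
      intro N
      induction N with
      | zero => intro i hi; omega
      | succ N ih =>
        intro i hi
        have hchild : ∀ s : SlpSym k m q,
            (rules i).1 = s ∨ (rules i).2 = s →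
            occ (SlpSym.term p) s = (exp s).count p := by
          intro s hs
          cases s with
          | term p' =>
            rw [hocc_term, hexp_t]
            rcases eq_or_ne p p' with h | h <;> simp [h, List.count_cons] <;> exact h.symm
          | nt i' =>
            have hlt := horder i i' (by rcases hs with h | h <;> [exact Or.inl h; exact Or.inr h])
            exact ih i' (by omega)
        rw [hocc_nt, hexp_n, List.count_append,
          hchild (rules i).1 (Or.inl rfl), hchild (rules i).2 (Or.inr rfl)]
        simp
    intro s
    cases s with
    | term p' =>
      rw [hocc_term, hexp_t]
      rcases eq_or_ne p p' with h | h <;> simp [h, List.count_cons] <;> exact h.symm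
    | nt i => exact hnt (i.val + 1) i (by omega)
  -- per-row identity
  have hrow : ∀ ℓ : Fin n,
      (∑ i : Fin k, V i * ((exp (SlpSym.nt (C ℓ))).count (i, j) : ℝ)) = M ℓ j := by
    intro ℓ
    set L := exp (SlpSym.nt (C ℓ)) with hL
    by_cases hmem : j ∈ L.map Prod.snd
    · obtain ⟨p, hpL, rfl⟩ := List.mem_map.mp hmem
      have hnd : L.Nodup := (hnodup ℓ).of_map
      rw [Finset.sum_eq_single p.1]
      · have h1 : List.count p L = 1 := count_eq_one_of_mem' hnd hpL
        rw [show (p.1, p.2) = p from rfl, h1]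
        simpa using hval ℓ p hpL
      · intro i _ hne
        have hni : (i, p.2) ∉ L := by
          intro hmem'
          have := List.inj_on_of_nodup_map (hnodup ℓ) hmem' hpL rfl
          exact hne (by simpa using congrArg Prod.fst this)
        rw [List.count_eq_zero_of_not_mem hni]
        simp
      · intro h; exact absurd (Finset.mem_univ p.1) h
    · have hMz : M ℓ j = 0 := by
        by_contra h; exact hmem ((hcolsM ℓ j).mpr h)
      rw [hMz]
      apply Finset.sum_eq_zero
      intro i _
      have : (i, j) ∉ L := fun hm => hmem (List.mem_map.mpr ⟨(i, j), hm, rfl⟩)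
      rw [List.count_eq_zero_of_not_mem this]
      simp
  calc (∑ ℓ, y ℓ * M ℓ j)
      = ∑ ℓ, ∑ i : Fin k,
          V i * ((occ (SlpSym.term (i, j)) (SlpSym.nt (C ℓ)) : ℝ) * y ℓ) := by
        apply Finset.sum_congr rfl
        intro ℓ _
        rw [← hrow ℓ, Finset.mul_sum]
        apply Finset.sum_congr rfl
        intro i _
        rw [hocc_count]
        ring
    _ = ∑ i : Fin k, V i *
        (∑ ℓ, (occ (SlpSym.term (i, j)) (SlpSym.nt (C ℓ)) : ℝ) * y ℓ) := by
        rw [Finset.sum_comm]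
        simp [Finset.mul_sum]
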